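/- Let f be continuous on the unit circle bΔ and suppose f extends to a holomorphic function F on the open unit disc, continuous on the closed disc. For any w ∈ ℂ with |w| > 1 and any polynomial P, if z ↦ f(z)/(z−w) + P(z) is nonvanishing on bΔ, then its winding number around 0 equals the number of zeros of z ↦ F(z) + (z−w)P(z) in the open unit disc, counted with multiplicity. -/

import Mathlib

open Polynomial Metric
open scoped Classical

/-- `g` (restricted to the unit circle) has winding number `n` around `0`:
there is a continuous argument lift `α` along `θ ↦ g (exp (iθ))` whose total
increase over `[0, 2π]` is `2πn`. -/
def HasWindingNumber (g : ℂ → ℂ) (n : ℤ) : Prop :=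
  ∃ α : ℝ → ℝ, Continuous α ∧
    (∀ θ : ℝ, g (Complex.exp (θ * Complex.I)) =
      (‖g (Complex.exp (θ * Complex.I))‖ : ℂ) * Complex.exp (α θ * Complex.I)) ∧
    α (2 * Real.pi) - α 0 = n * (2 * Real.pi)

/-- `f` on the unit circle extends continuously to the closed unit disc,
holomorphically on the open unit disc. -/
def ExtendsHolo (f : ℂ → ℂ) : Prop :=
  ∃ F : ℂ → ℂ, ContinuousOn F (closedBall 0 1) ∧
    DifferentiableOn ℂ F (ball 0 1) ∧ ∀ z ∈ sphere (0:ℂ) 1, F z = f z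

/-- Multiplicity of a zero of a (holomorphic) function: least `n` with
nonvanishing `n`-th derivative. -/
noncomputable def holoOrder (f : ℂ → ℂ) (z : ℂ) : ℕ :=
  sInf {n | iteratedDeriv n f z ≠ 0}

open Metric Filter

noncomputable section AuxWind

/-- Winding predicate for a loop parametrized by `[0, 2π]`. -/
def WL (u : ℝ → ℂ) (n : ℤ) : Prop :=
  ∃ α : ℝ → ℝ, Continuous α ∧
    (∀ θ : ℝ, u θ = (‖u θ‖ : ℂ) * Complex.exp (α θ * Complex.I)) ∧
    α (2 * Real.pi) - α 0 = n * (2 * Real.pi)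

lemma WL.congr {u v : ℝ → ℂ} {n : ℤ} (h : WL u n) (huv : ∀ θ, u θ = v θ) : WL v n := by
  have : u = v := funext huv
  exact this ▸ h

lemma WL.congr_int {u : ℝ → ℂ} {n m : ℤ} (h : WL u n) (hnm : n = m) : WL u m := hnm ▸ h

lemma WL.mul {u v : ℝ → ℂ} {m n : ℤ} (hu : WL u m) (hv : WL v n) :
    WL (fun θ => u θ * v θ) (m + n) := by
  obtain ⟨α, hαc, hα, hα2⟩ := hu
  obtain ⟨β, hβc, hβ, hβ2⟩ := hv
  refine ⟨fun θ => α θ + β θ, hαc.add hβc, fun θ => ?_, ?_⟩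
  · show u θ * v θ = (‖u θ * v θ‖ : ℂ) * Complex.exp (((α θ + β θ : ℝ) : ℂ) * Complex.I)
    calc u θ * v θ = ((‖u θ‖ : ℂ) * Complex.exp (α θ * Complex.I)) *
        ((‖v θ‖ : ℂ) * Complex.exp (β θ * Complex.I)) := by rw [← hα θ, ← hβ θ]
    _ = _ := by rw [norm_mul, Complex.ofReal_add, add_mul, Complex.exp_add]; push_cast; ring
  · show α (2 * Real.pi) + β (2 * Real.pi) - (α 0 + β 0) = _
    push_cast; push_cast at hα2 hβ2; linarith

lemma WL.of_posRe {u : ℝ → ℂ} (hc : Continuous u) (hre : ∀ θ, 0 < (u θ).re)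
    (hper : u (2 * Real.pi) = u 0) : WL u 0 := by
  refine ⟨fun θ => (u θ).arg, ?_, fun θ => ?_, ?_⟩
  case refine_3 => show (u (2 * Real.pi)).arg - (u 0).arg = _; rw [hper]; simp
  · rw [continuous_iff_continuousAt]
    intro θ
    exact (Complex.continuousAt_arg (Or.inl (hre θ))).comp hc.continuousAt
  · exact (Complex.norm_mul_exp_arg_mul_I _).symm

lemma WL.const (c : ℂ) : WL (fun _ => c) 0 := by
  refine ⟨fun _ => c.arg, continuous_const, fun θ => ?_, by simp⟩
  exact (Complex.norm_mul_exp_arg_mul_I _).symm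

lemma norm_exp_mul_I (θ : ℝ) : ‖Complex.exp (θ * Complex.I)‖ = 1 := by
  rw [Complex.norm_exp]
  simp

lemma exp_two_pi_eq : Complex.exp ((2 * Real.pi : ℝ) * Complex.I) = 1 := by
  push_cast
  exact Complex.exp_two_pi_mul_I

lemma exp_zero_eq : Complex.exp ((0 : ℝ) * Complex.I) = 1 := by simp

lemma cont_exp_I : Continuous fun θ : ℝ => Complex.exp ((θ : ℂ) * Complex.I) :=
  Complex.continuous_exp.comp (Complex.continuous_ofReal.mul continuous_const)

lemma WL.circle {r : ℝ} (hr : 0 < r) : WL (fun θ => (r : ℂ) * Complex.exp (θ * Complex.I)) 1 := by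
  refine ⟨fun θ => θ, continuous_id, fun θ => ?_, by push_cast; ring⟩
  have h1 : ‖(r : ℂ) * Complex.exp (θ * Complex.I)‖ = r := by
    rw [norm_mul, norm_exp_mul_I, Complex.norm_real, Real.norm_of_nonneg hr.le, mul_one]
  rw [h1]

lemma WL.pow {u : ℝ → ℂ} {n : ℤ} (h : WL u n) (k : ℕ) :
    WL (fun θ => (u θ) ^ k) (k * n) := by
  induction k with
  | zero => exact (WL.const 1).congr (fun θ => by simp) |>.congr_int (by simp)
  | succ k ih =>
      have := (ih.mul h).congr (fun θ => by rw [← pow_succ])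
      exact this.congr_int (by push_cast; try ring)

lemma WL.sub_inside {r : ℝ} (hr : 0 < r) {a : ℂ} (ha : ‖a‖ < r) :
    WL (fun θ => (r : ℂ) * Complex.exp (θ * Complex.I) - a) 1 := by
  have hrC : (r : ℂ) ≠ 0 := by exact_mod_cast hr.ne'
  have hpos : ∀ θ : ℝ, 0 < (1 - (a / r) * (Complex.exp (θ * Complex.I))⁻¹).re := by
    intro θ
    have hn : ‖(a / r) * (Complex.exp (θ * Complex.I))⁻¹‖ < 1 := by
      rw [norm_mul, norm_inv, norm_exp_mul_I, inv_one, mul_one, norm_div,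
        Complex.norm_real, Real.norm_of_nonneg hr.le]
      exact (div_lt_one hr).mpr ha
    have hle := Complex.re_le_norm ((a / r) * (Complex.exp (θ * Complex.I))⁻¹)
    simp only [Complex.sub_re, Complex.one_re, Complex.mul_re]
    have : ((a / r) * (Complex.exp (θ * Complex.I))⁻¹).re < 1 := lt_of_le_of_lt hle hn
    simp only [Complex.mul_re] at this
    linarith
  have h2 : WL (fun θ => 1 - (a / r) * (Complex.exp (θ * Complex.I))⁻¹) 0 := by
    refine WL.of_posRe ?_ hpos ?_
    · exact continuous_const.sub (continuous_const.mul
        ((cont_exp_I).inv₀ (fun θ => Complex.exp_ne_zero _)))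
    · rw [exp_two_pi_eq, exp_zero_eq]
  have h3 := (WL.circle hr).mul h2
  refine (h3.congr (fun θ => ?_)).congr_int (by ring)
  have he : Complex.exp (θ * Complex.I) ≠ 0 := Complex.exp_ne_zero _
  field_simp

lemma WL.dog {u v : ℝ → ℂ} {n : ℤ} (hv : WL v n) (hcu : Continuous u) (hcv : Continuous v)
    (hlt : ∀ θ, ‖u θ - v θ‖ < ‖v θ‖)
    (hpu : u (2 * Real.pi) = u 0) (hpv : v (2 * Real.pi) = v 0) : WL u n := by
  have hv0 : ∀ θ, v θ ≠ 0 := by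
    intro θ h
    have h2 := hlt θ
    rw [h] at h2
    simp only [sub_zero, norm_zero] at h2
    exact (norm_nonneg _).not_gt h2
  have h0 : WL (fun θ => u θ / v θ) 0 := by
    refine WL.of_posRe (hcu.div hcv hv0) ?_ (by rw [hpu, hpv])
    intro θ
    have h1 : ‖u θ / v θ - 1‖ < 1 := by
      rw [div_sub_one (hv0 θ), norm_div]
      exact (div_lt_one (norm_pos_iff.mpr (hv0 θ))).mpr (hlt θ)
    have hle := Complex.re_le_norm (1 - u θ / v θ)
    rw [norm_sub_rev] at hle
    simp only [Complex.sub_re, Complex.one_re] at hle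
    linarith
  have := (hv.mul h0).congr (fun θ => by rw [mul_comm, div_mul_cancel₀ _ (hv0 θ)])
  exact this.congr_int (by ring)


lemma norm_radial (ρ : ℝ) (hρ : 0 ≤ ρ) (θ : ℝ) :
    ‖(ρ : ℂ) * Complex.exp (θ * Complex.I)‖ = ρ := by
  rw [norm_mul, norm_exp_mul_I, Complex.norm_real, Real.norm_of_nonneg hρ, mul_one]

lemma radial_mem_closedBall {ρ b : ℝ} (hρ : 0 ≤ ρ) (hb : ρ ≤ b) (θ : ℝ) :
    (ρ : ℂ) * Complex.exp (θ * Complex.I) ∈ closedBall (0 : ℂ) b := by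
  rw [mem_closedBall_zero_iff, norm_radial ρ hρ]
  exact hb

lemma WL.step {G : ℂ → ℂ} {n : ℤ} {a b : ℝ} (ha : 0 ≤ a) (hab : a ≤ b)
    (hGc : ContinuousOn G (closedBall (0:ℂ) b))
    (hG0 : ∀ z : ℂ, a ≤ ‖z‖ → ‖z‖ ≤ b → G z ≠ 0)
    (hbase : WL (fun θ => G ((a : ℂ) * Complex.exp (θ * Complex.I))) n) :
    WL (fun θ => G ((b : ℂ) * Complex.exp (θ * Complex.I))) n := by
  rcases eq_or_lt_of_le hab with rfl | hlt
  · exact hbase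
  have hb0 : 0 < b := lt_of_le_of_lt ha hlt
  have hba : (0:ℝ) ≤ b - a := by linarith
  -- the annulus
  set S : Set ℂ := {z ∈ closedBall (0:ℂ) b | a ≤ ‖z‖} with hS
  have hScpt : IsCompact S := (isCompact_closedBall _ _).inter_right
      (isClosed_le continuous_const continuous_norm)
  have hSne : S.Nonempty := ⟨(b : ℂ), by
    simp only [hS, Set.mem_setOf_eq, mem_closedBall_zero_iff, Complex.norm_real,
      Real.norm_of_nonneg hb0.le]
    exact ⟨le_refl b, hab⟩⟩
  obtain ⟨z₀, hz₀S, hmin⟩ := hScpt.exists_isMinOn hSne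
    ((continuous_norm.comp_continuousOn (hGc.mono (fun z hz => hz.1))))
  set ε : ℝ := ‖G z₀‖ with hε
  have hεpos : 0 < ε := norm_pos_iff.mpr (hG0 z₀ hz₀S.2 (mem_closedBall_zero_iff.mp hz₀S.1))
  -- uniform continuity
  have huc := (isCompact_closedBall (0:ℂ) b).uniformContinuousOn_of_continuous hGc
  rw [Metric.uniformContinuousOn_iff] at huc
  obtain ⟨δ, hδpos, hδ⟩ := huc ε hεpos
  obtain ⟨N, hN⟩ := exists_nat_gt ((b - a) / δ)
  have hNpos : 0 < (N : ℝ) := lt_of_le_of_lt (by positivity) hN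
  set ρ : ℕ → ℝ := fun k => a + k * (b - a) / N with hρdef
  have haux : ∀ k : ℕ, 0 ≤ (k : ℝ) * (b - a) / N := fun k => by positivity
  have hρ0 : ∀ k, 0 ≤ ρ k := fun k => by
    have := haux k; simp only [hρdef]; linarith
  have hρa : ∀ k, a ≤ ρ k := fun k => by
    have := haux k; simp only [hρdef]; linarith
  have hρb : ∀ k : ℕ, k ≤ N → ρ k ≤ b := by
    intro k hk
    simp only [hρdef]
    have h2 : (k : ℝ) * (b - a) / N ≤ b - a := by
      rw [div_le_iff₀ hNpos]
      have : (k : ℝ) ≤ N := by exact_mod_cast hk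
      nlinarith
    linarith
  have hρd : ∀ k : ℕ, ρ (k + 1) - ρ k = (b - a) / N := by
    intro k
    simp only [hρdef]
    push_cast
    field_simp
    ring
  have hstep : (b - a) / N < δ := by
    rw [div_lt_iff₀ hNpos]
    rw [div_lt_iff₀ hδpos] at hN
    nlinarith
  have key : ∀ k : ℕ, k ≤ N → WL (fun θ => G ((ρ k : ℂ) * Complex.exp (θ * Complex.I))) n := by
    intro k
    induction k with
    | zero =>
        intro _
        refine hbase.congr (fun θ => ?_)
        simp only [hρdef]
        norm_num
    | succ k ih =>
        intro hk
        have hk' : k ≤ N := le_of_lt (Nat.lt_of_lt_of_le (Nat.lt_succ_self k) hk)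
        have prev := ih hk'
        have hcont : ∀ ρ' : ℝ, 0 ≤ ρ' → ρ' ≤ b →
            Continuous (fun θ : ℝ => G ((ρ' : ℂ) * Complex.exp (θ * Complex.I))) := by
          intro ρ' h0 h1
          exact hGc.comp_continuous (continuous_const.mul cont_exp_I)
            (fun θ => radial_mem_closedBall h0 h1 θ)
        have hmem : ∀ (j : ℕ), j ≤ N → ∀ θ : ℝ,
            (ρ j : ℂ) * Complex.exp (θ * Complex.I) ∈ closedBall (0:ℂ) b :=
          fun j hj θ => radial_mem_closedBall (hρ0 j) (hρb j hj) θ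
        refine WL.dog prev (hcont _ (hρ0 _) (hρb _ hk)) (hcont _ (hρ0 _) (hρb _ hk')) ?_ ?_ ?_
        · intro θ
          have hd : dist ((ρ (k+1) : ℂ) * Complex.exp (θ * Complex.I))
              ((ρ k : ℂ) * Complex.exp (θ * Complex.I)) < δ := by
            rw [dist_eq_norm, ← sub_mul, norm_mul, norm_exp_mul_I, mul_one]
            rw [← Complex.ofReal_sub, Complex.norm_real, Real.norm_of_nonneg (by
              rw [hρd k]; positivity)]

            rw [hρd k]; exact hstep
          have h1 := hδ _ (hmem (k+1) hk θ) _ (hmem k hk' θ) hd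
          rw [dist_eq_norm] at h1
          refine lt_of_lt_of_le h1 ?_
          refine hmin ?_
          constructor
          · exact hmem k hk' θ
          · rw [norm_radial _ (hρ0 k)]; exact hρa k
        · show G _ = G _
          rw [exp_two_pi_eq, exp_zero_eq]
        · show G _ = G _
          rw [exp_two_pi_eq, exp_zero_eq]
  have := key N (le_refl N)
  refine this.congr (fun θ => ?_)
  have : ρ N = b := by
    simp only [hρdef]
    field_simp
    ring
  rw [this]
lemma holo_facts : ∀ (m : ℕ) (G g : ℂ → ℂ) (z₀ : ℂ), AnalyticAt ℂ g z₀ → g z₀ ≠ 0 →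
    (∀ᶠ z in nhds z₀, G z = (z - z₀) ^ m * g z) →
    (∀ n < m, iteratedDeriv n G z₀ = 0) ∧ iteratedDeriv m G z₀ ≠ 0 := by
  intro m
  induction m with
  | zero =>
      intro G g z₀ hg hg0 hev
      refine ⟨fun n hn => absurd hn (Nat.not_lt_zero n), ?_⟩
      have h0 : G z₀ = g z₀ := by simpa using hev.self_of_nhds
      rw [iteratedDeriv_zero, h0]
      exact hg0
  | succ m ih =>
      intro G g z₀ hg hg0 hev
      have hg' : ∀ᶠ z in nhds z₀, AnalyticAt ℂ g z := hg.eventually_analyticAt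
      have hderiv : AnalyticAt ℂ (deriv g) z₀ := by
        have h1 : AnalyticOnNhd ℂ g {z₀} := fun z hz => Set.mem_singleton_iff.mp hz ▸ hg
        exact h1.deriv z₀ rfl
      set g₁ : ℂ → ℂ := fun z => ((m : ℂ) + 1) * g z + (z - z₀) * deriv g z with hg₁def
      have hg₁ : AnalyticAt ℂ g₁ z₀ :=
        (analyticAt_const.mul hg).add ((analyticAt_id.sub analyticAt_const).mul hderiv)
      have hg₁0 : g₁ z₀ ≠ 0 := by
        have h0 : g₁ z₀ = ((m : ℂ) + 1) * g z₀ := by simp [hg₁def]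
        rw [h0]
        exact mul_ne_zero (Nat.cast_add_one_ne_zero m) hg0
      have hevEq : G =ᶠ[nhds z₀] (fun z => (z - z₀) ^ (m + 1) * g z) := hev
      have hD : ∀ᶠ z in nhds z₀, deriv G z = (z - z₀) ^ m * g₁ z := by
        filter_upwards [hevEq.deriv, hg'] with z hz hza
        rw [hz]
        have hd1 : HasDerivAt (fun w : ℂ => (w - z₀) ^ (m + 1))
            (((m : ℂ) + 1) * (z - z₀) ^ m) z := by
          have := ((hasDerivAt_id z).sub_const z₀).pow (m + 1)
          simpa [Pi.pow_def] using this
        have hd2 := hd1.mul hza.differentiableAt.hasDerivAt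
        rw [show (fun z => (z - z₀) ^ (m + 1) * g z) = (fun w => (w - z₀) ^ (m + 1)) * g from rfl, hd2.deriv]
        simp only [hg₁def]
        ring
      obtain ⟨ihz, ihne⟩ := ih (deriv G) g₁ z₀ hg₁ hg₁0 hD
      constructor
      · intro n hn
        match n with
        | 0 =>
            have h0 : G z₀ = (z₀ - z₀) ^ (m + 1) * g z₀ := hev.self_of_nhds
            rw [iteratedDeriv_zero, h0, sub_self, zero_pow (Nat.succ_ne_zero m), zero_mul]
        | (k+1) =>
            rw [iteratedDeriv_succ']
            exact ihz k (by omega)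
      · rw [iteratedDeriv_succ']
        exact ihne

lemma holoOrder_eq_of_factor {G g : ℂ → ℂ} {z₀ : ℂ} {m : ℕ} (hg : AnalyticAt ℂ g z₀)
    (hg0 : g z₀ ≠ 0) (hev : ∀ᶠ z in nhds z₀, G z = (z - z₀) ^ m * g z) :
    holoOrder G z₀ = m := by
  obtain ⟨hzero, hne⟩ := holo_facts m G g z₀ hg hg0 hev
  unfold holoOrder
  refine le_antisymm (Nat.sInf_le hne) (le_csInf ⟨m, hne⟩ ?_)
  intro k hk
  by_contra h
  push_neg at h
  exact hk (hzero k h)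

lemma exists_order {G : ℂ → ℂ} (hG : AnalyticOnNhd ℂ G (ball (0:ℂ) 1)) {z₀ z₁ : ℂ}
    (hz₀ : z₀ ∈ ball (0:ℂ) 1) (hz₁ : z₁ ∈ ball (0:ℂ) 1) (hG1 : G z₁ ≠ 0) :
    ∃ (m : ℕ) (g : ℂ → ℂ), AnalyticAt ℂ g z₀ ∧ g z₀ ≠ 0 ∧
      ∀ᶠ z in nhds z₀, G z = (z - z₀) ^ m * g z := by
  have h := (hG z₀ hz₀).exists_eventuallyEq_pow_smul_nonzero_iff.mpr ?_
  · obtain ⟨n, g, h1, h2, h3⟩ := h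
    exact ⟨n, g, h1, h2, by simpa [smul_eq_mul] using h3⟩
  · intro hev
    exact hG1 (hG.eqOn_zero_of_preconnected_of_eventuallyEq_zero
      (convex_ball (0:ℂ) 1).isPreconnected hz₀ hev hz₁)
lemma ball_not_subset_finset (s : Finset ℂ) : ∃ z ∈ ball (0:ℂ) 1, z ∉ s := by
  by_contra h
  push_neg at h
  have hinf : (ball (0:ℂ) 1).Infinite :=
    infinite_of_mem_nhds (0:ℂ) (isOpen_ball.mem_nhds (by simp))
  exact hinf (Set.Finite.subset s.finite_toSet h)

lemma core_wind : ∀ (N : ℕ) (G : ℂ → ℂ) (s : Finset ℂ), s.card = N →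
    AnalyticOnNhd ℂ G (ball (0:ℂ) 1) →
    (∀ z : ℂ, z ∈ s ↔ z ∈ ball (0:ℂ) 1 ∧ G z = 0) →
    ∀ (r : ℝ), 0 < r → r < 1 → (∀ z ∈ s, ‖z‖ < r) →
    WL (fun θ => G ((r : ℂ) * Complex.exp (θ * Complex.I)))
      (∑ z ∈ s, (holoOrder G z : ℤ)) := by
  intro N
  induction N with
  | zero =>
      intro G s hcard hG hs r hr0 hr1 hrs
      have hsempty : s = ∅ := Finset.card_eq_zero.mp hcard
      subst hsempty
      rw [Finset.sum_empty]
      have hGc : ContinuousOn G (closedBall (0:ℂ) r) := by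
        intro z hz
        have hzb : z ∈ ball (0:ℂ) 1 :=
          mem_ball_zero_iff.mpr (lt_of_le_of_lt (mem_closedBall_zero_iff.mp hz) hr1)
        exact (hG z hzb).continuousAt.continuousWithinAt
      have hG0 : ∀ z : ℂ, (0:ℝ) ≤ ‖z‖ → ‖z‖ ≤ r → G z ≠ 0 := by
        intro z _ hzr hGz
        have hzb : z ∈ ball (0:ℂ) 1 := mem_ball_zero_iff.mpr (lt_of_le_of_lt hzr hr1)
        exact absurd ((hs z).mpr ⟨hzb, hGz⟩) (Finset.notMem_empty z)
      refine WL.step le_rfl hr0.le hGc hG0 ?_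
      refine (WL.const (G 0)).congr (fun θ => ?_)
      norm_num
  | succ N ih =>
      intro G s hcard hG hs r hr0 hr1 hrs
      obtain ⟨z₀, hz₀s⟩ := Finset.card_pos.mp (show 0 < s.card by omega)
      obtain ⟨hz₀b, hGz₀⟩ := (hs z₀).mp hz₀s
      obtain ⟨z₁, hz₁b, hz₁s⟩ := ball_not_subset_finset s
      have hGz₁ : G z₁ ≠ 0 := fun h => hz₁s ((hs z₁).mpr ⟨hz₁b, h⟩)
      obtain ⟨m, g, hg, hg0, hev⟩ := exists_order hG hz₀b hz₁b hGz₁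
      have hm : m ≠ 0 := by
        intro h
        subst h
        have : G z₀ = g z₀ := by simpa using hev.self_of_nhds
        exact hg0 (this ▸ hGz₀)
      -- define H
      set H : ℂ → ℂ := fun z => if z = z₀ then g z₀ else G z / (z - z₀) ^ m with hHdef
      have hHz₀ : H z₀ = g z₀ := by simp [hHdef]
      have hHg : H =ᶠ[nhds z₀] g := by
        filter_upwards [hev] with w hw
        by_cases hwz : w = z₀
        · subst hwz; simp [hHdef]
        · have hp : (w - z₀) ^ m ≠ 0 := pow_ne_zero _ (sub_ne_zero.mpr hwz)
          simp only [hHdef, if_neg hwz, hw]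
          field_simp
      have hH : AnalyticOnNhd ℂ H (ball (0:ℂ) 1) := by
        intro z hz
        by_cases hzz : z = z₀
        · subst hzz
          exact hg.congr hHg.symm
        · have h1 : AnalyticAt ℂ (fun w => G w / (w - z₀) ^ m) z :=
            (hG z hz).div ((analyticAt_id.sub analyticAt_const).pow m)
              (pow_ne_zero _ (sub_ne_zero.mpr hzz))
          refine h1.congr ?_
          filter_upwards [eventually_ne_nhds hzz] with w hw
          simp [hHdef, if_neg hw]
      have hfac : ∀ z ∈ ball (0:ℂ) 1, G z = (z - z₀) ^ m * H z := by
        intro z hz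
        by_cases hzz : z = z₀
        · subst hzz
          rw [hGz₀, sub_self, zero_pow hm, zero_mul]
        · have hp : (z - z₀) ^ m ≠ 0 := pow_ne_zero _ (sub_ne_zero.mpr hzz)
          simp only [hHdef, if_neg hzz]
          rw [mul_comm, div_mul_cancel₀ _ hp]
      have hs' : ∀ z : ℂ, z ∈ s.erase z₀ ↔ z ∈ ball (0:ℂ) 1 ∧ H z = 0 := by
        intro z
        constructor
        · intro hz
          obtain ⟨hzne, hzs⟩ := Finset.mem_erase.mp hz
          obtain ⟨hzb, hGz⟩ := (hs z).mp hzs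
          refine ⟨hzb, ?_⟩
          simp only [hHdef, if_neg hzne, hGz, zero_div]
        · rintro ⟨hzb, hHz⟩
          have hzne : z ≠ z₀ := by
            intro h
            rw [h, hHz₀] at hHz
            exact hg0 hHz
          refine Finset.mem_erase.mpr ⟨hzne, (hs z).mpr ⟨hzb, ?_⟩⟩
          rw [hfac z hzb, hHz, mul_zero]
      have hcard' : (s.erase z₀).card = N := by
        rw [Finset.card_erase_of_mem hz₀s, hcard]
        omega
      have hrs' : ∀ z ∈ s.erase z₀, ‖z‖ < r := fun z hz =>
        hrs z (Finset.mem_of_mem_erase hz)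
      have IH := ih H (s.erase z₀) hcard' hH hs' r hr0 hr1 hrs'
      -- orders agree
      have horder₀ : holoOrder G z₀ = m := holoOrder_eq_of_factor hg hg0 hev
      have horder : ∀ z ∈ s.erase z₀, holoOrder H z = holoOrder G z := by
        intro z hz
        obtain ⟨hzne, hzs⟩ := Finset.mem_erase.mp hz
        obtain ⟨hzb, _⟩ := (hs z).mp hzs
        obtain ⟨k, h, hh, hh0, hhev⟩ := exists_order hH hzb hz₀b (hHz₀ ▸ hg0)
        have h1 : holoOrder H z = k := holoOrder_eq_of_factor hh hh0 hhev
        have h2 : holoOrder G z = k := by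
          refine holoOrder_eq_of_factor
            (g := fun w => (w - z₀) ^ m * h w)
            (((analyticAt_id.sub analyticAt_const).pow m).mul hh)
            (mul_ne_zero (pow_ne_zero _ (sub_ne_zero.mpr hzne)) hh0) ?_
          filter_upwards [isOpen_ball.eventually_mem hzb, hhev] with w hw1 hw2
          rw [hfac w hw1, hw2]
          ring
        rw [h1, h2]
      -- assemble
      have hpow : WL (fun θ => ((r:ℂ) * Complex.exp (θ * Complex.I) - z₀) ^ m) ((m : ℤ)) := by
        have := (WL.sub_inside hr0 (hrs z₀ hz₀s)).pow m
        exact this.congr_int (by push_cast; ring)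
      have hmul := hpow.mul IH
      have heq : ((m : ℤ) + ∑ z ∈ s.erase z₀, (holoOrder H z : ℤ))
          = ∑ z ∈ s, (holoOrder G z : ℤ) := by
        rw [Finset.sum_congr rfl (fun z hz => by rw [horder z hz])]
        rw [← horder₀]
        exact Finset.add_sum_erase s (fun z => (holoOrder G z : ℤ)) hz₀s
      refine ((hmul.congr (fun θ => ?_)).congr_int heq)
      rw [← hfac _ ?_]
      rw [mem_ball_zero_iff, norm_radial r hr0.le]
      exact hr1
end AuxWind
theorem stmt18 (f F : ℂ → ℂ) (hf : ContinuousOn f (sphere (0:ℂ) 1))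
    (hF₁ : ContinuousOn F (closedBall 0 1)) (hF₂ : DifferentiableOn ℂ F (ball 0 1))
    (hFf : ∀ z ∈ sphere (0:ℂ) 1, F z = f z) :
    ∀ w : ℂ, 1 < ‖w‖ → ∀ P : Polynomial ℂ,
      (∀ z ∈ sphere (0:ℂ) 1, f z / (z - w) + P.eval z ≠ 0) →
      ∃ s : Finset ℂ,
        (∀ z : ℂ, z ∈ s ↔ z ∈ ball (0:ℂ) 1 ∧ F z + (z - w) * P.eval z = 0) ∧
        HasWindingNumber (fun z => f z / (z - w) + P.eval z)
          (∑ z ∈ s, (holoOrder (fun u => F u + (u - w) * P.eval u) z : ℤ)) := by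
  intro w hw P hnv
  set G : ℂ → ℂ := fun u => F u + (u - w) * P.eval u with hGdef
  have hw0 : w ≠ 0 := by
    intro h; rw [h] at hw; simp at hw; linarith
  have hPc : Continuous fun z : ℂ => (z - w) * P.eval z :=
    (continuous_id.sub continuous_const).mul (Polynomial.continuous P)
  have hGc : ContinuousOn G (closedBall (0:ℂ) 1) := hF₁.add hPc.continuousOn
  have hGd : DifferentiableOn ℂ G (ball (0:ℂ) 1) :=
    hF₂.add (((differentiable_id.sub (differentiable_const w)).mul
      (Polynomial.differentiable P)).differentiableOn)
  have hGa : AnalyticOnNhd ℂ G (ball (0:ℂ) 1) := fun z hz =>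
    hGd.analyticAt (isOpen_ball.mem_nhds hz)
  have hwz : ∀ z : ℂ, ‖z‖ = 1 → z - w ≠ 0 := by
    intro z hz h
    rw [sub_eq_zero] at h
    rw [h] at hz
    rw [hz] at hw
    linarith
  have hGform : ∀ z ∈ sphere (0:ℂ) 1, f z / (z - w) + P.eval z = G z / (z - w) := by
    intro z hz
    have h1 := hFf z hz
    have h2 : z - w ≠ 0 := hwz z (mem_sphere_zero_iff_norm.mp hz)
    rw [hGdef]
    field_simp
    rw [h1]
  have hGs : ∀ z ∈ sphere (0:ℂ) 1, G z ≠ 0 := by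
    intro z hz h
    apply hnv z hz
    rw [hGform z hz, h, zero_div]
  -- finiteness of the zero set
  set T : Set ℂ := closedBall (0:ℂ) 1 ∩ G ⁻¹' {0} with hTdef
  have hTclosed : IsClosed T :=
    hGc.preimage_isClosed_of_isClosed Metric.isClosed_closedBall isClosed_singleton
  have hTsub : ∀ z ∈ T, z ∈ ball (0:ℂ) 1 := by
    intro z hz
    rcases lt_or_eq_of_le (mem_closedBall_zero_iff.mp hz.1) with h | h
    · exact mem_ball_zero_iff.mpr h
    · exact absurd hz.2 (hGs z (mem_sphere_zero_iff_norm.mpr h))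
  have hTfin : T.Finite := by
    by_contra hinf
    obtain ⟨x, hxK, hacc⟩ := Set.Infinite.exists_accPt_of_subset_isCompact hinf
      (isCompact_closedBall (0:ℂ) 1) Set.inter_subset_left
    have hfreq := accPt_iff_frequently.mp hacc
    have hxT : x ∈ T := hTclosed.closure_subset
      (mem_closure_iff_frequently.mpr (hfreq.mono fun y hy => hy.2))
    have hxb : x ∈ ball (0:ℂ) 1 := hTsub x hxT
    have hfreq2 : ∃ᶠ z in nhdsWithin x {x}ᶜ, G z = 0 := by
      rw [frequently_nhdsWithin_iff]
      exact hfreq.mono (fun y hy => ⟨hy.2.2, hy.1⟩)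
    have hzero := hGa.eqOn_zero_of_preconnected_of_frequently_eq_zero
      (convex_ball (0:ℂ) 1).isPreconnected hxb hfreq2
    have h1cl : (1:ℂ) ∈ closure (ball (0:ℂ) 1) := by
      rw [closure_ball (0:ℂ) one_ne_zero]
      simp
    have hnebot : (nhdsWithin (1:ℂ) (ball (0:ℂ) 1)).NeBot :=
      mem_closure_iff_nhdsWithin_neBot.mp h1cl
    have ht1 : Filter.Tendsto G (nhdsWithin (1:ℂ) (ball (0:ℂ) 1)) (nhds (G 1)) :=
      (hGc 1 (by simp)).mono ball_subset_closedBall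
    have ht2 : Filter.Tendsto G (nhdsWithin (1:ℂ) (ball (0:ℂ) 1)) (nhds 0) := by
      refine Filter.Tendsto.congr' ?_ tendsto_const_nhds
      filter_upwards [self_mem_nhdsWithin] with z hz
      exact (hzero hz).symm
    exact hGs 1 (mem_sphere_zero_iff_norm.mpr (by norm_num)) (tendsto_nhds_unique ht1 ht2)
  have hZfin : {z : ℂ | z ∈ ball (0:ℂ) 1 ∧ G z = 0}.Finite :=
    hTfin.subset (fun z hz => ⟨ball_subset_closedBall hz.1, hz.2⟩)
  refine ⟨hZfin.toFinset, ?_, ?_⟩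
  · intro z
    rw [Set.Finite.mem_toFinset]
    exact Iff.rfl
  set s : Finset ℂ := hZfin.toFinset with hsdef
  have hsmem : ∀ z : ℂ, z ∈ s ↔ z ∈ ball (0:ℂ) 1 ∧ G z = 0 := by
    intro z
    rw [hsdef, Set.Finite.mem_toFinset]
    exact Iff.rfl
  obtain ⟨r, hr0, hr1, hrs⟩ : ∃ r : ℝ, 0 < r ∧ r < 1 ∧ ∀ z ∈ s, ‖z‖ < r := by
    rcases s.eq_empty_or_nonempty with he | hne
    · exact ⟨1/2, by norm_num, by norm_num, by simp [he]⟩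
    · have hM1 : s.sup' hne (fun z => ‖z‖) < 1 := (Finset.sup'_lt_iff hne).mpr
        (fun z hz => mem_ball_zero_iff.mp ((hsmem z).mp hz).1)
      obtain ⟨z', hz'⟩ := hne
      have hM0 : (0:ℝ) ≤ s.sup' ⟨z', hz'⟩ (fun z => ‖z‖) :=
        le_trans (norm_nonneg z') (Finset.le_sup' _ hz')
      refine ⟨(s.sup' ⟨z', hz'⟩ (fun z => ‖z‖) + 1)/2, by linarith, by linarith,
        fun z hz => lt_of_le_of_lt (Finset.le_sup' (fun z => ‖z‖) hz) (by linarith)⟩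
  have hwind1 := core_wind s.card G s rfl hGa hsmem r hr0 hr1 hrs
  have hann : ∀ z : ℂ, r ≤ ‖z‖ → ‖z‖ ≤ 1 → G z ≠ 0 := by
    intro z h1 h2 hGz
    rcases lt_or_eq_of_le h2 with h | h
    · exact absurd (hrs z ((hsmem z).mpr ⟨mem_ball_zero_iff.mpr h, hGz⟩)) (not_lt.mpr h1)
    · exact hGs z (mem_sphere_zero_iff_norm.mpr h) hGz
  have hwind2 := WL.step hr0.le hr1.le hGc hann hwind1
  -- winding of (z - w)⁻¹ is 0
  have hxi : ∀ θ : ℝ, 0 < (1 - Complex.exp (θ * Complex.I) * w⁻¹).re := by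
    intro θ
    have hn : ‖Complex.exp (θ * Complex.I) * w⁻¹‖ < 1 := by
      rw [norm_mul, norm_exp_mul_I, one_mul, norm_inv]
      exact inv_lt_one_of_one_lt₀ hw
    have hle := Complex.re_le_norm (Complex.exp (θ * Complex.I) * w⁻¹)
    simp only [Complex.sub_re, Complex.one_re]
    linarith
  have hxi0 : ∀ θ : ℝ, (1 - Complex.exp (θ * Complex.I) * w⁻¹) ≠ 0 := by
    intro θ h
    have := hxi θ
    rw [h] at this
    simp at this
  have hwinv : WL (fun θ => (Complex.exp (θ * Complex.I) - w)⁻¹) 0 := by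
    have hpos : WL (fun θ => (1 - Complex.exp (θ * Complex.I) * w⁻¹)⁻¹) 0 := by
      refine WL.of_posRe ?_ ?_ ?_
      · exact ((continuous_const.sub (cont_exp_I.mul continuous_const)).inv₀ hxi0)
      · intro θ
        rw [Complex.inv_re]
        exact div_pos (hxi θ) (Complex.normSq_pos.mpr (hxi0 θ))
      · rw [exp_two_pi_eq, exp_zero_eq]
    have := (WL.const (-w⁻¹)).mul hpos
    refine (this.congr (fun θ => ?_)).congr_int (by ring)
    have hkey : Complex.exp (θ * Complex.I) - w
        = (-w) * (1 - Complex.exp (θ * Complex.I) * w⁻¹) := by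
      field_simp
      ring
    rw [hkey, mul_inv, inv_neg]
  have hfinal := hwind2.mul hwinv
  have hNeq : (∑ z ∈ s, (holoOrder G z : ℤ)) + 0 = ∑ z ∈ s, (holoOrder G z : ℤ) := by ring
  refine ((hfinal.congr (fun θ => ?_)).congr_int hNeq)
  beta_reduce
  have hsph : Complex.exp (θ * Complex.I) ∈ sphere (0:ℂ) 1 :=
    mem_sphere_zero_iff_norm.mpr (norm_exp_mul_I θ)
  have h2 : Complex.exp (θ * Complex.I) - w ≠ 0 := hwz _ (norm_exp_mul_I θ)
  rw [Complex.ofReal_one, one_mul, hGform _ hsph]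
  rw [div_eq_mul_inv]
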